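/- There is no continuous map f from the unit sphere S³ = { z ∈ ℂ² : ‖z‖ = 1 } to the unit circle S¹ = { w ∈ ℂ : |w| = 1 } that is equivariant for the ℤ/3-actions given by scalar multiplication by ω = exp(2πi/3); that is, there is no continuous f : S³ → S¹ satisfying f(ω·z) = ω·f(z) for all z ∈ S³, where ω·(z₁,z₂) = (ωz₁, ωz₂). -/

import Mathlib

open Complex

private lemma telescope_prod (F : ℕ → ℂ) (hF : ∀ k, F k ≠ 0) (n : ℕ) :
    (∏ k ∈ Finset.range n, (F (k+1) / F k)) = F n / F 0 := by
  induction n with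
  | zero => rw [Finset.prod_range_zero, div_self (hF 0)]
  | succ n ih =>
    rw [Finset.prod_range_succ, ih, div_mul_div_comm, mul_comm (F n) (F (n+1)),
      mul_div_mul_right _ _ (hF n)]

private lemma no_half_int (ma m : ℤ) (h : 2 * Real.pi * m = 2 * Real.pi * ma + Real.pi) :
    False := by
  have hπ : (0:ℝ) < Real.pi := Real.pi_pos
  have h3 : Real.pi * (2*(m:ℝ)) = Real.pi * (2*(ma:ℝ)+1) := by linarith
  have h4 : (2*(m:ℝ)) = 2*(ma:ℝ)+1 := mul_left_cancel₀ (ne_of_gt hπ) h3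
  have h5 : (2*m : ℤ) = 2*ma+1 := by exact_mod_cast h4
  omega

private lemma two_pi_int_const {d : ℝ → ℝ} {a b : ℝ} (hab : a ≤ b)
    (hc : ContinuousOn d (Set.Icc a b))
    (hd : ∀ t ∈ Set.Icc a b, ∃ m : ℤ, d t = 2 * Real.pi * m) :
    d b = d a := by
  have hπ : (0:ℝ) < Real.pi := Real.pi_pos
  obtain ⟨ma, hma⟩ := hd a ⟨le_refl a, hab⟩
  obtain ⟨mb, hmb⟩ := hd b ⟨hab, le_refl b⟩
  by_contra hne
  rcases lt_or_gt_of_ne hne with h1 | h1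
  · -- d b < d a
    have hmlt : (mb : ℝ) < ma := by nlinarith
    have hmle : (mb : ℝ) + 1 ≤ ma := by exact_mod_cast Int.add_one_le_of_lt (by exact_mod_cast hmlt)
    have hv : 2*Real.pi*mb + Real.pi ∈ Set.Icc (d b) (d a) := by
      constructor
      · rw [hmb]; linarith
      · rw [hma]; nlinarith
    obtain ⟨t, ht, hdt⟩ := intermediate_value_Icc' hab hc hv
    obtain ⟨m, hm⟩ := hd t ht
    exact no_half_int mb m (by rw [← hm, hdt])
  · -- d a < d b
    have hmlt : (ma : ℝ) < mb := by nlinarith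
    have hmle : (ma : ℝ) + 1 ≤ mb := by exact_mod_cast Int.add_one_le_of_lt (by exact_mod_cast hmlt)
    have hv : 2*Real.pi*ma + Real.pi ∈ Set.Icc (d a) (d b) := by
      constructor
      · rw [hma]; linarith
      · rw [hmb]; nlinarith
    obtain ⟨t, ht, hdt⟩ := intermediate_value_Icc hab hc hv
    obtain ⟨m, hm⟩ := hd t ht
    exact no_half_int ma m (by rw [← hm, hdt])

/-- There is no continuous `ℤ/3`-equivariant map from `S³ ⊂ ℂ²` to `S¹ ⊂ ℂ`, where the
actions are by scalar multiplication by `ω = exp(2πi/3)`. -/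
theorem no_equivariant_map_S3_to_S1
    (ω : ℂ) (hω : ω = Complex.exp (2 * Real.pi * Complex.I / 3)) :
    ¬ ∃ f : {z : EuclideanSpace ℂ (Fin 2) // ‖z‖ = 1} → {w : ℂ // ‖w‖ = 1},
      Continuous f ∧
      ∀ (z : {z : EuclideanSpace ℂ (Fin 2) // ‖z‖ = 1})
        (h : ‖ω • (z : EuclideanSpace ℂ (Fin 2))‖ = 1),
        (f ⟨ω • (z : EuclideanSpace ℂ (Fin 2)), h⟩ : ℂ) = ω * (f z : ℂ) := by
  rintro ⟨f, hfc, hfe⟩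
  have hπ : (0:ℝ) < Real.pi := Real.pi_pos
  have hω' : ω = Complex.exp ((2 * Real.pi / 3 : ℝ) * I) := by
    rw [hω]; congr 1; push_cast; ring
  have hωabs : ‖ω‖ = 1 := by rw [hω']; exact Complex.norm_exp_ofReal_mul_I _
  -- the clamp function
  set q : ℝ → ℝ := fun s => min 1 (max 0 s) with hqdef
  have hq0 : ∀ s : ℝ, 0 ≤ q s := fun s => le_min one_pos.le (le_max_left 0 s)
  have hq1 : ∀ s : ℝ, q s ≤ 1 := fun s => min_le_left _ _
  have hqc : Continuous q := continuous_const.min (continuous_const.max continuous_id)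
  -- the homotopy in S³
  set v : ℝ → ℝ → EuclideanSpace ℂ (Fin 2) := fun s t =>
    (WithLp.equiv 2 (Fin 2 → ℂ)).symm
      ![(q s : ℂ) * Complex.exp ((t : ℂ) * I), ((Real.sqrt (1 - q s ^ 2) : ℝ) : ℂ)] with hvdef
  have hvnorm : ∀ s t, ‖v s t‖ = 1 := by
    intro s t
    rw [EuclideanSpace.norm_eq]
    have h1 : ‖Complex.exp ((t:ℂ) * I)‖ = 1 := Complex.norm_exp_ofReal_mul_I t
    have h2 : (0:ℝ) ≤ 1 - q s ^ 2 := by nlinarith [hq0 s, hq1 s]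
    have h3 : ∀ i, ‖(v s t) i‖ ^ 2 = ![q s ^ 2, 1 - q s ^ 2] i := by
      intro i
      fin_cases i
      · simp [hvdef, h1, Complex.norm_real, _root_.abs_of_nonneg (hq0 s), mul_pow]
      · simp [hvdef, Complex.norm_real, _root_.abs_of_nonneg (Real.sqrt_nonneg _), Real.sq_sqrt h2]
    rw [Fin.sum_univ_two, h3 0, h3 1]
    norm_num
  have hvc : Continuous fun p : ℝ × ℝ => v p.1 p.2 := by
    apply Continuous.comp (PiLp.continuous_toLp 2 (fun _ : Fin 2 => ℂ))
    apply continuous_pi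
    intro i
    fin_cases i
    · exact ((Complex.continuous_ofReal.comp (hqc.comp continuous_fst)).mul
        (Complex.continuous_exp.comp
          ((Complex.continuous_ofReal.comp continuous_snd).mul continuous_const)))
    · exact Complex.continuous_ofReal.comp
        (Real.continuous_sqrt.comp (continuous_const.sub ((hqc.comp continuous_fst).pow 2)))
  -- the map P
  set P : ℝ → ℝ → ℂ := fun s t => ((f ⟨v s t, hvnorm s t⟩ : {w : ℂ // ‖w‖ = 1}) : ℂ) with hPdef
  have hPc : Continuous fun p : ℝ × ℝ => P p.1 p.2 :=
    continuous_subtype_val.comp (hfc.comp (hvc.subtype_mk _))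
  have hPn : ∀ s t, ‖P s t‖ = 1 := fun s t => (f ⟨v s t, hvnorm s t⟩).2
  have hPabs : ∀ s t, ‖P s t‖ = 1 := fun s t => by
    exact hPn s t
  have hPne : ∀ s t, P s t ≠ 0 := by
    intro s t h
    have := hPabs s t
    rw [h] at this
    simp at this
  have hPcongr : ∀ {x y : EuclideanSpace ℂ (Fin 2)} (hx : ‖x‖ = 1) (hy : ‖y‖ = 1), x = y →
      ((f ⟨x, hx⟩ : {w : ℂ // ‖w‖ = 1}) : ℂ) = ((f ⟨y, hy⟩ : {w : ℂ // ‖w‖ = 1}) : ℂ) := by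
    intro x y hx hy h
    cases h
    rfl
  -- basic identities for v and P
  have hq0' : q 0 = 0 := by simp [hqdef]
  have hq1' : q 1 = 1 := by simp [hqdef]
  have hv0 : ∀ t : ℝ, v 0 t = v 0 0 := by
    intro t
    ext i
    fin_cases i <;> simp [hvdef, hq0']
  have hvper : ∀ s t : ℝ, v s (t + 2*Real.pi) = v s t := by
    intro s t
    ext i
    fin_cases i
    · show (q s : ℂ) * Complex.exp ((↑(t + 2*Real.pi) : ℂ) * I) = (q s : ℂ) * Complex.exp ((t:ℂ) * I)
      congr 1
      push_cast
      rw [add_mul, Complex.exp_add, Complex.exp_two_pi_mul_I, mul_one]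
    · rfl
  have hvsmul : ∀ t : ℝ, ω • v 1 t = v 1 (t + 2*Real.pi/3) := by
    intro t
    ext i
    fin_cases i
    · show ω * ((q 1 : ℂ) * Complex.exp ((t:ℂ) * I))
        = (q 1 : ℂ) * Complex.exp ((↑(t + 2*Real.pi/3) : ℂ) * I)
      rw [hq1', hω', ← mul_assoc, mul_comm _ ((1:ℝ):ℂ), mul_assoc, ← Complex.exp_add]
      congr 2
      push_cast
      ring
    · show ω * ((Real.sqrt (1 - q 1 ^ 2) : ℝ) : ℂ) = ((Real.sqrt (1 - q 1 ^ 2) : ℝ) : ℂ)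
      rw [hq1']
      norm_num
  have hP0 : ∀ t : ℝ, P 0 t = P 0 0 := fun t => hPcongr _ _ (hv0 t)
  have hPper : ∀ s : ℝ, P s (2*Real.pi) = P s 0 := by
    intro s
    have h := hPcongr (hvnorm s (0 + 2*Real.pi)) (hvnorm s 0) (hvper s 0)
    simpa using h
  have hPeq : ∀ t : ℝ, P 1 (t + 2*Real.pi/3) = ω * P 1 t := by
    intro t
    have hsm : ‖ω • v 1 t‖ = 1 := by
      rw [norm_smul, hvnorm, hωabs, one_mul]
    have h1 := hfe ⟨v 1 t, hvnorm 1 t⟩ hsm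
    rw [← h1]
    exact hPcongr _ _ (hvsmul t).symm
  -- uniform continuity on a compact rectangle
  have hK : IsCompact ((Set.Icc (0:ℝ) 1) ×ˢ (Set.Icc (0:ℝ) (2*Real.pi))) :=
    isCompact_Icc.prod isCompact_Icc
  obtain ⟨δ, hδ, hδ'⟩ := Metric.uniformContinuousOn_iff.mp
    (hK.uniformContinuousOn_of_continuous hPc.continuousOn) 1 one_pos
  obtain ⟨n, hn⟩ := exists_nat_gt (1/δ)
  have hn0 : (0:ℝ) < n := lt_trans (by positivity) hn
  have hnne : (n:ℝ) ≠ 0 := ne_of_gt hn0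
  have hsmall : ∀ t ∈ Set.Icc (0:ℝ) (2*Real.pi), ∀ k : ℕ, k < n →
      ‖P ((↑(k+1))/(n:ℝ)) t - P ((k:ℝ)/(n:ℝ)) t‖ < 1 := by
    intro t ht k hk
    have hk1 : ((↑(k+1)):ℝ)/(n:ℝ) ≤ 1 := by
      rw [div_le_one hn0]
      exact_mod_cast Nat.succ_le_of_lt hk
    have hkk : ((k:ℝ))/(n:ℝ) ≤ ((↑(k+1)):ℝ)/(n:ℝ) := by
      gcongr
      exact Nat.le_succ k
    have hmem1 : (((↑(k+1)):ℝ)/(n:ℝ), t) ∈ (Set.Icc (0:ℝ) 1) ×ˢ (Set.Icc (0:ℝ) (2*Real.pi)) :=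
      ⟨⟨by positivity, hk1⟩, ht⟩
    have hmem2 : (((k:ℝ))/(n:ℝ), t) ∈ (Set.Icc (0:ℝ) 1) ×ˢ (Set.Icc (0:ℝ) (2*Real.pi)) :=
      ⟨⟨by positivity, le_trans hkk hk1⟩, ht⟩
    have hdist : dist ((((↑(k+1)):ℝ)/(n:ℝ), t)) ((((k:ℝ))/(n:ℝ), t)) < δ := by
      rw [Prod.dist_eq]
      simp only [dist_self]
      have hd1 : dist (((↑(k+1)):ℝ)/(n:ℝ)) (((k:ℝ))/(n:ℝ)) = 1/(n:ℝ) := by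
        rw [Real.dist_eq]
        have : ((↑(k+1)):ℝ)/(n:ℝ) - ((k:ℝ))/(n:ℝ) = 1/(n:ℝ) := by
          push_cast; field_simp; ring
        rw [this, abs_of_pos (by positivity)]
      rw [hd1]
      have h1n : 1/(n:ℝ) < δ := by
        rw [div_lt_iff₀ hn0]
        rw [div_lt_iff₀ hδ] at hn
        linarith [hn]
      rw [max_eq_left (by positivity)]
      exact h1n
    have := hδ' _ hmem1 _ hmem2 hdist
    rwa [Complex.dist_eq] at this
  -- the lift θ
  set θ : ℝ → ℝ := fun t => Complex.arg (P 0 0) +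
      ∑ k ∈ Finset.range n, Complex.arg (P ((↑(k+1))/(n:ℝ)) t / P ((k:ℝ)/(n:ℝ)) t) with hθdef
  -- ratios lie in the slit plane when increments are small
  have hslit : ∀ (t : ℝ) (k : ℕ),
      ‖P ((↑(k+1))/(n:ℝ)) t - P ((k:ℝ)/(n:ℝ)) t‖ < 1 →
      (P ((↑(k+1))/(n:ℝ)) t / P ((k:ℝ)/(n:ℝ)) t) ∈ Complex.slitPlane := by
    intro t k hlt
    set a := P ((↑(k+1))/(n:ℝ)) t with ha
    set b := P ((k:ℝ)/(n:ℝ)) t with hb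
    have hbne : b ≠ 0 := hPne _ _
    have hb1 : ‖b‖ = 1 := hPabs _ _
    have h1 : ‖a/b - 1‖ < 1 := by
      rw [div_sub_one hbne, norm_div, hb1, div_one]
      exact hlt
    rw [Complex.mem_slitPlane_iff]
    left
    have h3 : Complex.normSq (a/b - 1) < 1 := by
      rw [← Complex.sq_norm]
      nlinarith [norm_nonneg (a/b - 1)]
    rw [Complex.normSq_apply, Complex.sub_re, Complex.sub_im, Complex.one_re, Complex.one_im,
      sub_zero] at h3
    nlinarith [sq_nonneg ((a/b).im)]
  -- θ is continuous on [0, 2π]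
  have hPcont1 : ∀ s : ℝ, Continuous (fun t => P s t) := by
    intro s
    exact hPc.comp (Continuous.prodMk_right s)
  have hθcont : ContinuousOn θ (Set.Icc (0:ℝ) (2*Real.pi)) := by
    apply ContinuousOn.add continuousOn_const
    apply continuousOn_finset_sum
    intro k hk
    intro t ht
    have hcw : ContinuousWithinAt (fun t => P ((↑(k+1))/(n:ℝ)) t / P ((k:ℝ)/(n:ℝ)) t)
        (Set.Icc (0:ℝ) (2*Real.pi)) t :=
      (((hPcont1 _).continuousWithinAt).div ((hPcont1 _).continuousWithinAt) (hPne _ _))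
    show ContinuousWithinAt
      (Complex.arg ∘ fun t => P ((↑(k+1))/(n:ℝ)) t / P ((k:ℝ)/(n:ℝ)) t)
      (Set.Icc (0:ℝ) (2*Real.pi)) t
    exact ContinuousAt.comp_continuousWithinAt
      (Complex.continuousAt_arg (hslit t k (hsmall t ht k (Finset.mem_range.mp hk)))) hcw
  -- exp(θ t * I) = P 1 t
  have unit_exp : ∀ z : ℂ, ‖z‖ = 1 → Complex.exp ((z.arg : ℂ) * I) = z := by
    intro z hz
    have h := Complex.norm_mul_exp_arg_mul_I z
    rwa [hz, Complex.ofReal_one, one_mul] at h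
  have hexp : ∀ t : ℝ, Complex.exp ((θ t : ℂ) * I) = P 1 t := by
    intro t
    have habsr : ∀ k : ℕ, ‖P ((↑(k+1))/(n:ℝ)) t / P ((k:ℝ)/(n:ℝ)) t‖ = 1 := by
      intro k
      rw [norm_div, hPabs, hPabs, div_one]
    have hsplit : Complex.exp ((θ t : ℂ) * I) = Complex.exp ((Complex.arg (P 0 0) : ℂ) * I) *
        ∏ k ∈ Finset.range n,
          Complex.exp ((Complex.arg (P ((↑(k+1))/(n:ℝ)) t / P ((k:ℝ)/(n:ℝ)) t) : ℂ) * I) := by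
      simp only [hθdef]
      push_cast
      rw [add_mul, Complex.exp_add, Finset.sum_mul, Complex.exp_sum]
    rw [hsplit, unit_exp _ (hPabs 0 0),
      Finset.prod_congr rfl (fun k _ => unit_exp _ (habsr k))]
    have htel := telescope_prod (fun k : ℕ => P ((k:ℝ)/(n:ℝ)) t) (fun k => hPne _ _) n
    rw [show ((n:ℝ)/(n:ℝ)) = 1 from div_self hnne] at htel
    rw [show (((0:ℕ):ℝ)/(n:ℝ)) = 0 by simp] at htel
    rw [htel, ← hP0 t, mul_comm, div_mul_cancel₀ _ (hPne 0 t)]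
  -- the deck-transformation discrepancy D
  set D : ℝ → ℝ := fun t => θ (t + 2*Real.pi/3) - θ t - 2*Real.pi/3 with hDdef
  have hDint : ∀ t : ℝ, ∃ m : ℤ, D t = 2 * Real.pi * m := by
    intro t
    have h1 : Complex.exp ((θ (t + 2*Real.pi/3) : ℂ) * I)
        = Complex.exp (((θ t : ℝ) : ℂ) * I + ((2*Real.pi/3 : ℝ) : ℂ) * I) := by
      rw [hexp, hPeq t, ← hexp t, hω', Complex.exp_add]
      ring
    have h2 : Complex.exp (((D t : ℝ) : ℂ) * I) = 1 := by
      simp only [hDdef]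
      push_cast
      rw [sub_mul, sub_mul, Complex.exp_sub, Complex.exp_sub, h1, Complex.exp_add]
      field_simp
      congr 1; push_cast; ring
    obtain ⟨m, hm⟩ := Complex.exp_eq_one_iff.mp h2
    refine ⟨m, ?_⟩
    have him := congrArg Complex.im hm
    simpa [mul_comm] using him
  have hDcont : ContinuousOn D (Set.Icc (0:ℝ) (4*Real.pi/3)) := by
    apply ContinuousOn.sub _ continuousOn_const
    apply ContinuousOn.sub
    · apply hθcont.comp (continuous_id.add continuous_const).continuousOn
      intro t ht
      exact ⟨by simp; linarith [ht.1], by simp; linarith [ht.2]⟩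
    · exact hθcont.mono (Set.Icc_subset_Icc le_rfl (by linarith))
  have e1 : D (2*Real.pi/3) = D 0 :=
    two_pi_int_const (by positivity) (hDcont.mono (Set.Icc_subset_Icc le_rfl (by linarith)))
      (fun t _ => hDint t)
  have e2 : D (4*Real.pi/3) = D 0 :=
    two_pi_int_const (by positivity) hDcont (fun t _ => hDint t)
  obtain ⟨m0, hm0⟩ := hDint 0
  -- θ is 2π-periodic at the endpoints
  have hθper : θ (2*Real.pi) = θ 0 := by
    simp only [hθdef]
    congr 1
    apply Finset.sum_congr rfl
    intro k _
    rw [hPper, hPper]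
  -- the telescoping identity
  have key : θ (2*Real.pi) - θ 0 = D (4*Real.pi/3) + D (2*Real.pi/3) + D 0 + 2*Real.pi := by
    simp only [hDdef]
    rw [show (4*Real.pi/3) + 2*Real.pi/3 = 2*Real.pi by ring,
      show (2*Real.pi/3) + 2*Real.pi/3 = 4*Real.pi/3 by ring,
      show (0:ℝ) + 2*Real.pi/3 = 2*Real.pi/3 by ring]
    ring
  rw [hθper, e1, e2, hm0] at key
  have hz : (3*(m0:ℝ) + 1) * (2*Real.pi) = 0 := by linarith
  have h2π : (2*Real.pi) ≠ 0 := by positivity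
  have h31 : (3*(m0:ℝ) + 1) = 0 := by
    rcases mul_eq_zero.mp hz with h | h
    · exact h
    · exact absurd h h2π
  have : (3*m0 + 1 : ℤ) = 0 := by exact_mod_cast h31
  omega
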